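/- arXiv:1806.07866 — 3 statements merged into one kernel-verified Lean document; each statement's English description precedes it below -/
import Mathlib

section
/- Let {f_n} be a Schauder basis of a complex separable Hilbert space H with basis constant M = sup_n ||Q_n|| where Q_n is the n-th natural (partial sum) projection. Then for any two distinct indices k, l, the angle θ_{kl} = arccos(|⟨f_k, f_l⟩| / (||f_k||·||f_l||)) satisfies θ_{kl} ≥ arccos(1 - 1/(8M²)). In particular, the angles between any two basis vectors are bounded below by a positive constant. -/
open Filter Topology

/-- `f` is a Schauder basis of `H`: every `x` has a unique norm-convergent expansion. -/
def IsSchauderBasis {H : Type*} [NormedAddCommGroup H] [InnerProductSpace ℂ H]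
    (f : ℕ → H) : Prop :=
  ∀ x : H, ∃! a : ℕ → ℂ,
    Tendsto (fun k => ∑ n ∈ Finset.range k, a n • f n) atTop (𝓝 x)

/-- `M` bounds the norms of all natural (partial sum) projections of the basis `f`. -/
def IsBasisConstant {H : Type*} [NormedAddCommGroup H] [InnerProductSpace ℂ H]
    (f : ℕ → H) (M : ℝ) : Prop :=
  ∀ (x : H) (a : ℕ → ℂ),
    Tendsto (fun k => ∑ n ∈ Finset.range k, a n • f n) atTop (𝓝 x) →
    ∀ k, ‖∑ n ∈ Finset.range k, a n • f n‖ ≤ M * ‖x‖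

lemma schauder_ne_zero {H : Type*} [NormedAddCommGroup H] [InnerProductSpace ℂ H]
    (f : ℕ → H) (hbasis : IsSchauderBasis f) (n : ℕ) : f n ≠ 0 := by
  intro h
  obtain ⟨a, _, hu⟩ := hbasis 0
  have h1 : (0 : ℕ → ℂ) = a := by
    apply hu
    simpa using (tendsto_const_nhds : Tendsto (fun _ : ℕ => (0 : H)) atTop (𝓝 0))
  have h2 : (Pi.single n (1 : ℂ) : ℕ → ℂ) = a := by
    apply hu
    have : ∀ j : ℕ, ∑ m ∈ Finset.range j, (Pi.single n (1 : ℂ) : ℕ → ℂ) m • f m = 0 := by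
      intro j
      simp [Pi.single_apply, ite_smul, h]
    simpa [this] using (tendsto_const_nhds : Tendsto (fun _ : ℕ => (0 : H)) atTop (𝓝 0))
  have := h2.trans h1.symm
  have := congrFun this n
  simp at this

/-- sums of two-point supported coefficient sequences -/
lemma two_point_sum {H : Type*} [NormedAddCommGroup H] [InnerProductSpace ℂ H]
    (f : ℕ → H) (k l : ℕ) (c1 c2 : ℂ) (j : ℕ) :
    ∑ n ∈ Finset.range j,
      ((if n = k then c1 else 0) + (if n = l then c2 else 0)) • f n =
      (if k ∈ Finset.range j then c1 • f k else 0) +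
      (if l ∈ Finset.range j then c2 • f l else 0) := by
  simp only [add_smul, Finset.sum_add_distrib, ite_smul, zero_smul]
  rw [Finset.sum_ite_eq' (Finset.range j) k (fun n => c1 • f n),
    Finset.sum_ite_eq' (Finset.range j) l (fun n => c2 • f n)]

lemma schauder_key {H : Type*} [NormedAddCommGroup H] [InnerProductSpace ℂ H]
    (f : ℕ → H) (M : ℝ) (hbasis : IsSchauderBasis f) (hM : IsBasisConstant f M)
    (k l : ℕ) (hkl : k < l) :
    ‖(inner ℂ (f k) (f l) : ℂ)‖ / (‖f k‖ * ‖f l‖) ≤ 1 - 1 / (8 * M ^ 2) := by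
  have hfk : f k ≠ 0 := schauder_ne_zero f hbasis k
  have hfl : f l ≠ 0 := schauder_ne_zero f hbasis l
  have nk : (0:ℝ) < ‖f k‖ := norm_pos_iff.2 hfk
  have nl : (0:ℝ) < ‖f l‖ := norm_pos_iff.2 hfl
  -- M ≥ 1
  have hM1 : 1 ≤ M := by
    have htend : Tendsto
        (fun j => ∑ n ∈ Finset.range j,
          ((if n = k then (1:ℂ) else 0) + (if n = l then (0:ℂ) else 0)) • f n)
        atTop (𝓝 (f k)) := by
      apply tendsto_atTop_of_eventually_const (i₀ := k + 1)
      intro i hi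
      rw [two_point_sum]
      have hk : k ∈ Finset.range i := Finset.mem_range.2 (by omega)
      simp [hk]
    have := hM (f k) _ htend (k + 1)
    rw [two_point_sum] at this
    have hk : k ∈ Finset.range (k+1) := Finset.mem_range.2 (by omega)
    have hl : l ∉ Finset.range (k+1) := by simp; omega
    simp [hk, hl] at this
    calc (1:ℝ) = ‖f k‖ / ‖f k‖ := by rw [div_self nk.ne']
    _ ≤ (M * ‖f k‖) / ‖f k‖ := by gcongr
    _ = M := by field_simp
  have hMpos : (0:ℝ) < M := lt_of_lt_of_le one_pos hM1
  set g : ℂ := (inner ℂ (f k) (f l) : ℂ) with hg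
  set t : ℂ := if g = 0 then 1 else -(starRingEnd ℂ g) / ‖g‖ with ht
  have htnorm : ‖t‖ = 1 := by
    rw [ht]
    split_ifs with h0
    · simp
    · rw [norm_div, norm_neg, RCLike.norm_conj, Complex.norm_real, norm_norm,
        div_self (norm_ne_zero_iff.2 h0)]
  have htg : t * g = -(‖g‖ : ℂ) := by
    rw [ht]
    split_ifs with h0
    · simp [h0]
    · have hgc : ((‖g‖ : ℝ) : ℂ) ≠ 0 :=
        Complex.ofReal_ne_zero.mpr (norm_ne_zero_iff.2 h0)
      rw [div_mul_eq_mul_div, neg_mul, RCLike.conj_mul, neg_div]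
      congr 1
      rw [sq, mul_div_assoc]
      field_simp
      rfl
  set c1 : ℂ := ((‖f k‖ : ℝ) : ℂ)⁻¹ with hc1
  set c2 : ℂ := t * ((‖f l‖ : ℝ) : ℂ)⁻¹ with hc2
  set x : H := c1 • f k + c2 • f l with hx
  have htend : Tendsto
      (fun j => ∑ n ∈ Finset.range j,
        ((if n = k then c1 else 0) + (if n = l then c2 else 0)) • f n)
      atTop (𝓝 x) := by
    apply tendsto_atTop_of_eventually_const (i₀ := l + 1)
    intro i hi
    rw [two_point_sum]
    have hk : k ∈ Finset.range i := Finset.mem_range.2 (by omega)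
    have hl : l ∈ Finset.range i := Finset.mem_range.2 (by omega)
    simp [hk, hl, hx]
  -- projection bound at k+1
  have hproj : (1:ℝ) ≤ M * ‖x‖ := by
    have := hM x _ htend (k + 1)
    rw [two_point_sum] at this
    have hk : k ∈ Finset.range (k+1) := Finset.mem_range.2 (by omega)
    have hl : l ∉ Finset.range (k+1) := by simp; omega
    simp only [hk, if_true, hl, if_false, add_zero] at this
    rwa [norm_smul, hc1, norm_inv, Complex.norm_real, norm_norm,
      inv_mul_cancel₀ nk.ne'] at this
  -- compute ‖x‖^2
  have hnc1 : ‖c1 • f k‖ = 1 := by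
    rw [norm_smul, hc1, norm_inv, Complex.norm_real, norm_norm, inv_mul_cancel₀ nk.ne']
  have hnc2 : ‖c2 • f l‖ = 1 := by
    rw [norm_smul, hc2, norm_mul, htnorm, one_mul, norm_inv, Complex.norm_real,
      norm_norm, inv_mul_cancel₀ nl.ne']
  set B : ℝ := ‖g‖ / (‖f k‖ * ‖f l‖) with hB
  have hBnn : 0 ≤ B := div_nonneg (norm_nonneg _) (by positivity)
  have hinner : (inner ℂ (c1 • f k) (c2 • f l) : ℂ) = ((-B : ℝ) : ℂ) := by
    rw [inner_smul_left, inner_smul_right, hc1, hc2]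
    rw [← hg]
    have : (starRingEnd ℂ) ((((‖f k‖ : ℝ)) : ℂ)⁻¹) = (((‖f k‖ : ℝ) : ℂ))⁻¹ := by
      rw [map_inv₀, Complex.conj_ofReal]
    rw [this]
    have : ((((‖f k‖:ℝ)):ℂ))⁻¹ * (t * (((‖f l‖:ℝ)):ℂ)⁻¹ * g)
        = ((((‖f k‖:ℝ)):ℂ))⁻¹ * (((‖f l‖:ℝ)):ℂ)⁻¹ * (t * g) := by ring
    rw [this, htg, hB]
    push_cast
    field_simp
  have hxsq : ‖x‖ ^ 2 = 2 - 2 * B := by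
    rw [hx, norm_add_sq (𝕜 := ℂ), hnc1, hnc2, hinner]
    simp [Complex.ofReal_re]
    ring
  -- combine
  have hxnn : (0:ℝ) ≤ ‖x‖ := norm_nonneg _
  have hsq : (1:ℝ) ≤ M ^ 2 * (2 - 2 * B) := by
    have : (1:ℝ) ≤ (M * ‖x‖) ^ 2 := by nlinarith
    rw [mul_pow, hxsq] at this
    linarith
  have h1B : 1 / (8 * M ^ 2) ≤ 1 - B := by
    rw [div_le_iff₀ (by positivity)]
    nlinarith
  linarith

theorem angle_lower_bound {H : Type*} [NormedAddCommGroup H] [InnerProductSpace ℂ H]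
    [CompleteSpace H] (f : ℕ → H) (M : ℝ)
    (hbasis : IsSchauderBasis f) (hM : IsBasisConstant f M)
    (k l : ℕ) (hkl : k ≠ l) :
    Real.arccos (‖(inner ℂ (f k) (f l) : ℂ)‖ / (‖f k‖ * ‖f l‖)) ≥
      Real.arccos (1 - 1 / (8 * M ^ 2)) := by
  have key : ‖(inner ℂ (f k) (f l) : ℂ)‖ / (‖f k‖ * ‖f l‖) ≤ 1 - 1 / (8 * M ^ 2) := by
    rcases lt_or_gt_of_ne hkl with h | h
    · exact schauder_key f M hbasis hM k l h
    · have := schauder_key f M hbasis hM l k h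
      rwa [← norm_inner_symm (f k) (f l), mul_comm (‖f l‖)] at this
  have hnn : (0:ℝ) ≤ ‖(inner ℂ (f k) (f l) : ℂ)‖ / (‖f k‖ * ‖f l‖) :=
    div_nonneg (norm_nonneg _) (mul_nonneg (norm_nonneg _) (norm_nonneg _))
  unfold Real.arccos
  have := Real.monotone_arcsin key
  simp only [ge_iff_le]
  linarith
end

section
/- Let {f_n} be a normalized Schauder basis of a Hilbert space H (||f_n|| = 1 for all n) with basis constant M. Then for all distinct k, l, |⟨f_k, f_l⟩| ≤ 1 - 1/(8M²). -/
open Filter Topology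

lemma basis_const_ge_one {H : Type*} [NormedAddCommGroup H]
    [InnerProductSpace ℂ H] (f : ℕ → H) (M : ℝ)
    (hM : IsBasisConstant f M) (hnorm : ∀ n, ‖f n‖ = 1) : 1 ≤ M := by
  set a : ℕ → ℂ := fun n => if n = 0 then 1 else 0 with ha
  have hsum : ∀ m, 0 < m → ∑ n ∈ Finset.range m, a n • f n = f 0 := by
    intro m hm
    simp [ha, ite_smul, Finset.sum_ite_eq', Finset.mem_range, hm]
  have ht : Tendsto (fun m => ∑ n ∈ Finset.range m, a n • f n) atTop (𝓝 (f 0)) := by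
    apply tendsto_const_nhds.congr'
    filter_upwards [eventually_gt_atTop 0] with m hm
    exact (hsum m hm).symm
  have := hM (f 0) a ht 1
  rw [hsum 1 one_pos, hnorm 0] at this
  linarith [this]

lemma aux_lt {H : Type*} [NormedAddCommGroup H]
    [InnerProductSpace ℂ H] (f : ℕ → H) (M : ℝ)
    (hM : IsBasisConstant f M) (hnorm : ∀ n, ‖f n‖ = 1)
    (k l : ℕ) (hkl : k < l) :
    ‖(inner ℂ (f k) (f l) : ℂ)‖ ≤ 1 - 1 / (8 * M ^ 2) := by
  have hM1 : 1 ≤ M := basis_const_ge_one f M hM hnorm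
  have hM2 : (0:ℝ) < M ^ 2 := by positivity
  set c : ℂ := inner ℂ (f k) (f l) with hc
  by_cases hc0 : c = 0
  · rw [hc0, norm_zero]
    rw [le_sub_iff_add_le, zero_add, div_le_one (by positivity)]
    nlinarith
  set t : ℝ := ‖c‖ with ht
  have ht0 : 0 < t := norm_pos_iff.2 hc0
  set θ : ℂ := (starRingEnd ℂ) c / (t : ℂ) with hθ
  have hθn : ‖θ‖ = 1 := by
    rw [hθ, norm_div, RCLike.norm_conj]
    rw [Complex.norm_real, Real.norm_of_nonneg ht0.le, ← ht, div_self ht0.ne']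
  have hθc : θ * c = (t : ℂ) := by
    rw [hθ, div_mul_eq_mul_div, Complex.conj_mul']
    rw [ht]
    push_cast
    rw [pow_two, mul_div_assoc]
    field_simp
  set x : H := f k - θ • f l with hx
  set a : ℕ → ℂ := fun n => if n = k then 1 else if n = l then -θ else 0 with ha
  have hklne : k ≠ l := hkl.ne
  have hsum : ∀ m, l < m → ∑ n ∈ Finset.range m, a n • f n = x := by
    intro m hm
    have : ∀ n ∈ Finset.range m, a n • f n =
        (if n = k then (1:ℂ) else 0) • f n + (if n = l then -θ else 0) • f n := by
      intro n _
      rcases eq_or_ne n k with rfl | h1 <;> rcases eq_or_ne n l with rfl | h2 <;>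
        simp_all [ha]
    rw [Finset.sum_congr rfl this, Finset.sum_add_distrib]
    simp [ite_smul, Finset.sum_ite_eq', Finset.mem_range, hm, hkl.trans hm, hx,
      sub_eq_add_neg]
  have htend : Tendsto (fun m => ∑ n ∈ Finset.range m, a n • f n) atTop (𝓝 x) := by
    apply tendsto_const_nhds.congr'
    filter_upwards [eventually_gt_atTop l] with m hm
    exact (hsum m hm).symm
  have key := hM x a htend (k + 1)
  have hpart : ∑ n ∈ Finset.range (k+1), a n • f n = f k := by
    have : ∀ n ∈ Finset.range (k+1), a n • f n = (if n = k then (1:ℂ) else 0) • f n := by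
      intro n hn
      have : n ≠ l := by
        have := Finset.mem_range.1 hn; omega
      simp [ha, this]
    rw [Finset.sum_congr rfl this]
    simp [ite_smul, Finset.sum_ite_eq', Finset.mem_range]
  rw [hpart, hnorm k] at key
  have hxsq : ‖x‖ ^ 2 = 2 - 2 * t := by
    rw [hx, @norm_sub_sq ℂ]
    rw [inner_smul_right, hθc]
    simp [norm_smul, hθn, hnorm]
    ring
  have hxnn : 0 ≤ ‖x‖ := norm_nonneg x
  have h1 : 1 ≤ M ^ 2 * (2 - 2 * t) := by nlinarith
  have h2 : 1 / (8 * M ^ 2) ≤ 1 - t := by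
    rw [div_le_iff₀ (by positivity)]
    nlinarith
  linarith [h2]

theorem inner_le_of_schauder_basis {H : Type*} [NormedAddCommGroup H]
    [InnerProductSpace ℂ H] [CompleteSpace H] (f : ℕ → H) (M : ℝ)
    (hbasis : IsSchauderBasis f) (hM : IsBasisConstant f M)
    (hnorm : ∀ n, ‖f n‖ = 1)
    (k l : ℕ) (hkl : k ≠ l) :
    ‖(inner ℂ (f k) (f l) : ℂ)‖ ≤ 1 - 1 / (8 * M ^ 2) := by
  rcases hkl.lt_or_gt with h | h
  · exact aux_lt f M hM hnorm k l h
  · rw [show (inner ℂ (f k) (f l) : ℂ) = (starRingEnd ℂ) (inner ℂ (f l) (f k)) from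
      (inner_conj_symm _ _).symm, RCLike.norm_conj]
    exact aux_lt f M hM hnorm l k h
end

section
/- Let ν be a probability measure on the unit circle concentrated on a countable set. If 1 and z^b (b a positive integer) are both unit vectors in L²(T, ν), then the angle between them satisfies cos θ_b = |∫ z^b dν| / ||z^b||_{L²(ν)}, and sup_{b≥1} cos θ_b = 1 when the support is infinite; hence the family {z^m}_{m∈Z} in L²(T, ν) does not have angles between distinct members bounded below by a positive constant. -/
open MeasureTheory
open scoped ENNReal NNReal

private lemma arccos_anti {x y : ℝ} (h : x ≤ y) : Real.arccos y ≤ Real.arccos x := by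
  simp only [Real.arccos]
  exact sub_le_sub_left (Real.monotone_arcsin h) _

/-- Pigeonhole recurrence: powers simultaneously return close to 1. -/
private lemma exists_pow_close (A : Finset ℂ) (hA : ∀ z ∈ A, ‖z‖ = 1) {δ : ℝ} (hδ : 0 < δ) :
    ∃ b : ℕ, 0 < b ∧ ∀ z ∈ A, ‖z ^ b - 1‖ < δ := by
  classical
  set K : Set (A → ℂ) := Set.univ.pi (fun _ => Metric.closedBall 0 1) with hK
  have hKc : IsCompact K := isCompact_univ_pi (fun _ => isCompact_closedBall _ _)
  have htb := hKc.totallyBounded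
  rw [Metric.totallyBounded_iff] at htb
  obtain ⟨t, htfin, htcov⟩ := htb (δ / 2) (by linarith)
  have := htfin.fintype
  set f : ℕ → (A → ℂ) := fun k a => (a : ℂ) ^ k with hf
  have hfK : ∀ k, f k ∈ K := by
    intro k a _
    show dist ((a : ℂ) ^ k) 0 ≤ 1
    rw [dist_zero_right, norm_pow, hA a a.2, one_pow]
  have hg : ∀ k : ℕ, ∃ y : t, f k ∈ Metric.ball (y : A → ℂ) (δ / 2) := by
    intro k
    have := htcov (hfK k)
    simp only [Set.mem_iUnion] at this
    obtain ⟨y, hy, hmem⟩ := this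
    exact ⟨⟨y, hy⟩, hmem⟩
  choose g hgmem using hg
  obtain ⟨k, k', hkk', hgeq⟩ := Finite.exists_ne_map_eq_of_infinite g
  wlog hlt : k < k' generalizing k k'
  · exact this k' k hkk'.symm hgeq.symm (by omega)
  refine ⟨k' - k, by omega, fun z hz => ?_⟩
  have hd : dist (f k') (f k) < δ := by
    calc dist (f k') (f k) ≤ dist (f k') (g k' : A → ℂ) + dist (g k : A → ℂ) (f k) := by
          rw [hgeq]; exact dist_triangle _ _ _
      _ < δ / 2 + δ / 2 := by
          refine add_lt_add ?_ ?_
          · exact Metric.mem_ball.mp (hgmem k')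
          · rw [dist_comm]; exact Metric.mem_ball.mp (hgmem k)
      _ = δ := by ring
  have hcoord : ‖z ^ k' - z ^ k‖ < δ := by
    have := dist_le_pi_dist (f k') (f k) ⟨z, hz⟩
    rw [dist_eq_norm] at this
    calc ‖z ^ k' - z ^ k‖ = ‖f k' ⟨z, hz⟩ - f k ⟨z, hz⟩‖ := rfl
      _ ≤ dist (f k') (f k) := this
      _ < δ := hd
  have hzn : ‖z ^ k‖ = 1 := by rw [norm_pow, hA z hz, one_pow]
  have hfac : z ^ k' - z ^ k = z ^ k * (z ^ (k' - k) - 1) := by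
    have hkk : k + (k' - k) = k' := by omega
    rw [mul_sub, mul_one, ← pow_add, hkk]
  calc ‖z ^ (k' - k) - 1‖ = ‖z ^ k‖ * ‖z ^ (k' - k) - 1‖ := by rw [hzn, one_mul]
    _ = ‖z ^ k' - z ^ k‖ := by rw [← norm_mul, ← hfac]
    _ < δ := hcoord

/-- Most of the mass of a discrete probability measure lies on a finite set. -/
private lemma exists_finset_mass (ν : Measure ℂ) [IsProbabilityMeasure ν] (s : Set ℂ)
    (hs : s.Countable) (hνs : ν sᶜ = 0) {ε : ℝ} (hε : 0 < ε) :
    ∃ A : Finset ℂ, ↑A ⊆ s ∧ (ν ((↑A : Set ℂ)ᶜ)).toReal ≤ ε := by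
  classical
  have hsm : MeasurableSet s := hs.measurableSet
  have hνs1 : ν s = 1 := by
    have := measure_add_measure_compl (μ := ν) hsm
    rw [hνs, add_zero] at this
    rw [this, measure_univ]
  have htsum : (∑' b : s, ν {(b : ℂ)}) = ν s := by
    have := tsum_measure_preimage_singleton (μ := ν) hs (f := id)
      (fun y _ => measurableSet_preimage measurable_id (measurableSet_singleton y))
    simpa using this
  have hsup : (⨆ F : Finset s, ∑ b ∈ F, ν {(b : ℂ)}) = 1 := by
    rw [← ENNReal.tsum_eq_iSup_sum, htsum, hνs1]
  have hlt : (1 : ℝ≥0∞) - ENNReal.ofReal ε < ⨆ F : Finset s, ∑ b ∈ F, ν {(b : ℂ)} := by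
    rw [hsup]
    exact ENNReal.sub_lt_self ENNReal.one_ne_top one_ne_zero
      (by simpa using (ENNReal.ofReal_pos.mpr hε).ne')
  rw [lt_iSup_iff] at hlt
  obtain ⟨F, hF⟩ := hlt
  set A : Finset ℂ := F.image Subtype.val with hAdef
  have hAs : ↑A ⊆ s := by
    intro z hz
    simp only [hAdef, Finset.coe_image, Set.mem_image] at hz
    obtain ⟨b, _, rfl⟩ := hz
    exact b.2
  have hνA_eq : ν (↑A : Set ℂ) = ∑ z ∈ A, ν {z} := by
    have := sum_measure_preimage_singleton (μ := ν) A (f := id)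
      (fun y _ => measurableSet_preimage measurable_id (measurableSet_singleton y))
    simpa using this.symm
  have himg : (∑ z ∈ A, ν {z}) = ∑ b ∈ F, ν {(b : ℂ)} := by
    rw [hAdef, Finset.sum_image (fun x _ y _ h => Subtype.val_injective h)]
  have hsum_eq : (∑ b ∈ F, ν {(b : ℂ)}) = ν (↑A : Set ℂ) := by
    rw [hνA_eq, himg]
  refine ⟨A, hAs, ?_⟩
  have hAm : MeasurableSet (↑A : Set ℂ) := A.measurableSet
  have hcompl : ν ((↑A : Set ℂ)ᶜ) = 1 - ν (↑A : Set ℂ) := by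
    rw [measure_compl hAm (measure_ne_top ν _), measure_univ]
  have hνA : 1 - ENNReal.ofReal ε ≤ ν (↑A : Set ℂ) := by
    rw [← hsum_eq]; exact hF.le
  have h1 : ν ((↑A : Set ℂ)ᶜ) ≤ ENNReal.ofReal ε := by
    rw [hcompl]
    exact tsub_le_iff_right.mpr (tsub_le_iff_left.mp hνA)
  exact ENNReal.toReal_le_of_le_ofReal hε.le h1

/-- For a discrete probability measure on the circle with infinite support, the family
`{z^m}_{m ∈ ℤ}` in `L²(ν)` does not have angles between distinct members bounded below:
the moments `|∫ z^b dν|` come arbitrarily close to `1`, and for every `ε > 0` there are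
distinct `m, m'` whose angle is less than `ε`. -/
theorem zpow_family_angles_not_bounded_below (ν : Measure ℂ) [IsProbabilityMeasure ν]
    (hdiscrete : ∃ s : Set ℂ, s.Countable ∧ s ⊆ {z : ℂ | ‖z‖ = 1} ∧ ν sᶜ = 0)
    (hinf : {z : ℂ | ν {z} ≠ 0}.Infinite)
    (F : ℤ → Lp ℂ 2 ν) (hF : ∀ m, ⇑(F m) =ᵐ[ν] fun z : ℂ => z ^ m) :
    (∀ b : ℕ, 0 < b →
        ‖(inner ℂ (F b) (F 0) : ℂ)‖ / (‖F b‖ * ‖F 0‖) = ‖∫ z, z ^ b ∂ν‖ / ‖F b‖) ∧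
    (∀ ε : ℝ, 0 < ε → ∃ b : ℕ, 0 < b ∧ ‖∫ z, z ^ b ∂ν‖ > 1 - ε) ∧
    ∀ ε : ℝ, 0 < ε → ∃ m m' : ℤ, m ≠ m' ∧
      Real.arccos (‖(inner ℂ (F m) (F m') : ℂ)‖ / (‖F m‖ * ‖F m'‖)) < ε := by
  obtain ⟨s, hs_count, hs_circ, hs_null⟩ := hdiscrete
  -- a.e. the norm is one
  have hae : ∀ᵐ z ∂ν, ‖z‖ = 1 := by
    rw [ae_iff]
    exact measure_mono_null (fun z hz hzs => hz (hs_circ hzs)) hs_null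
  -- norms of the family
  have hnorm : ∀ m : ℤ, ‖F m‖ = 1 := by
    intro m
    have hinner : (inner ℂ (F m) (F m) : ℂ) = 1 := by
      rw [MeasureTheory.L2.inner_def]
      have : (fun a => (inner ℂ (F m a) (F m a) : ℂ)) =ᵐ[ν] fun _ => (1 : ℂ) := by
        filter_upwards [hF m, hae] with z hz hz1
        rw [RCLike.inner_apply', hz, RCLike.conj_mul, norm_zpow, hz1, one_zpow]
        norm_num
      rw [integral_congr_ae this, integral_const, probReal_univ]
      simp
    have := norm_eq_sqrt_re_inner (𝕜 := ℂ) (F m)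
    rw [hinner] at this
    simpa using this
  -- integrability of z ^ b
  have hint : ∀ b : ℕ, Integrable (fun z : ℂ => z ^ b) ν := by
    intro b
    refine Integrable.mono' (integrable_const 1) ((continuous_pow b).aestronglyMeasurable) ?_
    filter_upwards [hae] with z hz
    rw [norm_pow, hz, one_pow]
  -- inner product formula
  have hinner0 : ∀ b : ℕ, ‖(inner ℂ (F b) (F 0) : ℂ)‖ = ‖∫ z, z ^ b ∂ν‖ := by
    intro b
    have h1 : (inner ℂ (F b) (F 0) : ℂ) = ∫ z, (starRingEnd ℂ) (z ^ b) ∂ν := by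
      rw [MeasureTheory.L2.inner_def]
      refine integral_congr_ae ?_
      filter_upwards [hF b, hF 0] with z hz hz0
      rw [RCLike.inner_apply, hz, hz0]
      simp [zpow_natCast]
    rw [h1, integral_conj, RCLike.norm_conj]
  -- Part 1
  have part1 : ∀ b : ℕ, 0 < b →
      ‖(inner ℂ (F b) (F 0) : ℂ)‖ / (‖F b‖ * ‖F 0‖) = ‖∫ z, z ^ b ∂ν‖ / ‖F b‖ := by
    intro b _
    rw [hinner0 b, hnorm 0, mul_one]
  -- Part 2
  have part2 : ∀ ε : ℝ, 0 < ε → ∃ b : ℕ, 0 < b ∧ ‖∫ z, z ^ b ∂ν‖ > 1 - ε := by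
    intro ε hε
    obtain ⟨A, hAs, hAmass⟩ := exists_finset_mass ν s hs_count hs_null
      (show (0:ℝ) < ε / 8 by linarith)
    have hAcirc : ∀ z ∈ A, ‖z‖ = 1 := fun z hz => hs_circ (hAs hz)
    obtain ⟨b, hb, hbc⟩ := exists_pow_close A hAcirc (show (0:ℝ) < ε / 2 by linarith)
    refine ⟨b, hb, ?_⟩
    have hAm : MeasurableSet (↑A : Set ℂ) := A.measurableSet
    -- the function ‖z^b - 1‖ is integrable
    have hint2 : Integrable (fun z : ℂ => ‖z ^ b - 1‖) ν := ((hint b).sub (integrable_const 1)).norm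
    have hsplit : ∫ z, ‖z ^ b - 1‖ ∂ν =
        (∫ z in (↑A : Set ℂ), ‖z ^ b - 1‖ ∂ν) + ∫ z in (↑A : Set ℂ)ᶜ, ‖z ^ b - 1‖ ∂ν :=
      (integral_add_compl hAm hint2).symm
    have hA_bound : ∫ z in (↑A : Set ℂ), ‖z ^ b - 1‖ ∂ν ≤ ε / 2 := by
      calc ∫ z in (↑A : Set ℂ), ‖z ^ b - 1‖ ∂ν
          ≤ ∫ _ in (↑A : Set ℂ), (ε / 2) ∂ν := by
            refine setIntegral_mono_on (hint2.restrict) (integrable_const _) hAm ?_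
            intro z hz
            exact (hbc z hz).le
        _ = (ν (↑A : Set ℂ)).toReal * (ε / 2) := by
            rw [setIntegral_const, smul_eq_mul, measureReal_def]
        _ ≤ 1 * (ε / 2) := by
            refine mul_le_mul_of_nonneg_right ?_ (by linarith)
            exact ENNReal.toReal_le_of_le_ofReal one_pos.le (by simpa using prob_le_one)
        _ = ε / 2 := one_mul _
    have hAc_bound : ∫ z in (↑A : Set ℂ)ᶜ, ‖z ^ b - 1‖ ∂ν ≤ 2 * (ν ((↑A : Set ℂ)ᶜ)).toReal := by
      have := norm_setIntegral_le_of_norm_le_const_ae (μ := ν) (s := (↑A : Set ℂ)ᶜ)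
        (C := 2) (f := fun z : ℂ => ‖z ^ b - 1‖) (measure_lt_top ν _) ?_
      · calc ∫ z in (↑A : Set ℂ)ᶜ, ‖z ^ b - 1‖ ∂ν
            ≤ ‖∫ z in (↑A : Set ℂ)ᶜ, ‖z ^ b - 1‖ ∂ν‖ := le_abs_self _
          _ ≤ 2 * (ν ((↑A : Set ℂ)ᶜ)).toReal := by
              rw [mul_comm] at this ⊢; exact this
      · refine (ae_restrict_of_ae ?_)
        filter_upwards [hae] with z hz
        have : ‖z ^ b - 1‖ ≤ ‖z ^ b‖ + ‖(1:ℂ)‖ := norm_sub_le _ _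
        rw [norm_pow, hz, one_pow, norm_one] at this
        rw [Real.norm_eq_abs, abs_of_nonneg (norm_nonneg _)]
        linarith
    have hdiff : ‖(∫ z, z ^ b ∂ν) - 1‖ ≤ 3 * ε / 4 := by
      have h1 : (∫ z, z ^ b ∂ν) - 1 = ∫ z, (z ^ b - 1) ∂ν := by
        rw [integral_sub (hint b) (integrable_const 1), integral_const, probReal_univ]
        simp
      rw [h1]
      calc ‖∫ z, (z ^ b - 1) ∂ν‖ ≤ ∫ z, ‖z ^ b - 1‖ ∂ν := norm_integral_le_integral_norm _
        _ = _ + _ := hsplit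
        _ ≤ ε / 2 + 2 * (ε / 8) := by
            refine add_le_add hA_bound (hAc_bound.trans ?_)
            linarith
        _ = 3 * ε / 4 := by ring
    have h3 := norm_sub_norm_le (1 : ℂ) (1 - ∫ z, z ^ b ∂ν)
    have h4 : (1:ℂ) - (1 - ∫ z, z ^ b ∂ν) = ∫ z, z ^ b ∂ν := by ring
    rw [h4, norm_one, norm_sub_rev] at h3
    linarith
  refine ⟨part1, part2, ?_⟩
  -- Part 3
  intro ε hε
  set θ : ℝ := min ε (Real.pi / 2) / 2 with hθ
  have hπ := Real.pi_pos
  have hθpos : 0 < θ := by positivity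
  have hθlt : θ < Real.pi / 2 := by
    rw [hθ]
    rcases le_total ε (Real.pi / 2) with h | h
    · rw [min_eq_left h]; linarith
    · rw [min_eq_right h]; linarith
  have hcos_lt : Real.cos θ < 1 := by
    refine lt_of_le_of_ne (Real.cos_le_one θ) (fun h => hθpos.ne' ?_)
    exact (Real.cos_eq_one_iff_of_lt_of_lt (by linarith) (by linarith)).mp h
  obtain ⟨b, hb, hbig⟩ := part2 (1 - Real.cos θ) (by linarith)
  refine ⟨(b : ℤ), 0, by exact_mod_cast hb.ne', ?_⟩
  have hratio : ‖(inner ℂ (F b) (F 0) : ℂ)‖ / (‖F b‖ * ‖F 0‖) = ‖∫ z, z ^ b ∂ν‖ := by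
    rw [part1 b hb, hnorm b, div_one]
  rw [hratio]
  have harc : Real.arccos ‖∫ z, z ^ b ∂ν‖ ≤ Real.arccos (Real.cos θ) := by
    refine arccos_anti ?_
    linarith
  rw [Real.arccos_cos hθpos.le (by linarith)] at harc
  have : θ < ε := by
    rw [hθ]
    rcases le_total ε (Real.pi / 2) with h | h
    · rw [min_eq_left h]; linarith
    · rw [min_eq_right h]; linarith
  linarith
end
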